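/- Fix n ≥ 2, σ > 0, T_s > 0, and reals b_0, …, b_k with b_i = 2^i b_0 and b_0 > 0. Define f(γ) = b_0 + b_1 γ + ⋯ + b_k γ^k and g(γ) = σ + (n/(n−1)) T_s γ, and S(γ) = f(γ) g(γ). Then S(γ) S''(γ) − 2 (S'(γ))^2 < 0 for all γ ∈ [0,1], where derivatives are with respect to γ. -/

import Mathlib

open Finset

lemma sumQ (c d : ℝ) : ∀ (K : ℕ) (A B : ℝ),
    ∑ m ∈ Finset.range K, (A + c * m) * (B + d * m) =
      (K:ℝ) * A * B + (A * d + B * c) * ((K:ℝ) * ((K:ℝ) - 1)) / 2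
        + c * d * ((K:ℝ) * ((K:ℝ) - 1) * (2 * (K:ℝ) - 1)) / 6 := by
  intro K
  induction K with
  | zero => intro A B; simp
  | succ K ih =>
    intro A B
    rw [Finset.sum_range_succ, ih]
    push_cast
    ring

lemma window (N lo K : ℕ) (f : ℕ → ℝ) (P : ℕ → Prop) [DecidablePred P]
    (h : ∀ i, i < N → (P i ↔ (lo ≤ i ∧ i < lo + K))) (h2 : lo + K ≤ N) :
    ∑ i ∈ Finset.range N, (if P i then f i else 0) = ∑ m ∈ Finset.range K, f (lo + m) := by
  have key : (Finset.range N).filter P =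
      (Finset.range K).map ⟨fun m => lo + m, show Function.Injective (fun m : ℕ => lo + m) from fun a b hab => by simpa using hab⟩ := by
    ext j
    simp only [Finset.mem_filter, Finset.mem_range, Finset.mem_map,
      Function.Embedding.coeFn_mk]
    constructor
    · rintro ⟨hj, hP⟩
      obtain ⟨ha, hb⟩ := (h j hj).1 hP
      exact ⟨j - lo, by omega, by omega⟩
    · rintro ⟨m, hm, rfl⟩
      exact ⟨by omega, (h _ (by omega)).2 ⟨by omega, by omega⟩⟩
  rw [← Finset.sum_filter, key, Finset.sum_map]
  rfl

lemma keyIneq (k m : ℕ) :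
    (∑ i ∈ Finset.range (m+1), if i ≤ k ∧ m+2 ≤ k+i then ((m:ℝ) - i + 1) * ((m:ℝ) - i + 2) else 0)
      ≤ 2 * ∑ i ∈ Finset.range (m+1), if i+1 ≤ k ∧ m+1 ≤ k+i then ((i:ℝ) + 1) * ((m:ℝ) - i + 1) else 0 := by
  have hRnn : (0:ℝ) ≤ ∑ i ∈ Finset.range (m+1),
      if i+1 ≤ k ∧ m+1 ≤ k+i then ((i:ℝ) + 1) * ((m:ℝ) - i + 1) else 0 := by
    apply Finset.sum_nonneg
    intro i hi
    have him : (i:ℝ) ≤ m := by exact_mod_cast Nat.lt_succ_iff.mp (Finset.mem_range.mp hi)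
    split_ifs
    · nlinarith [Nat.cast_nonneg (α := ℝ) i]
    · exact le_rfl
  rcases lt_or_ge (2*k) (m+2) with hcase | hcase
  · -- LHS is zero
    have hL : (∑ i ∈ Finset.range (m+1),
        if i ≤ k ∧ m+2 ≤ k+i then ((m:ℝ) - i + 1) * ((m:ℝ) - i + 2) else 0) = 0 := by
      apply Finset.sum_eq_zero
      intro i _
      rw [if_neg]
      omega
    rw [hL]
    linarith
  rcases le_or_gt (m+1) k with hk | hk
  · -- full windows case : m ≤ k - 1
    have hR : (∑ i ∈ Finset.range (m+1),
        if i+1 ≤ k ∧ m+1 ≤ k+i then ((i:ℝ) + 1) * ((m:ℝ) - i + 1) else 0)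
        = ∑ i ∈ Finset.range (m+1), ((1:ℝ) + 1 * i) * (((m:ℝ) + 1) + (-1) * i) := by
      apply Finset.sum_congr rfl
      intro i hi
      rw [if_pos (by have := Finset.mem_range.mp hi; omega)]
      ring
    have hLle : (∑ i ∈ Finset.range (m+1),
        if i ≤ k ∧ m+2 ≤ k+i then ((m:ℝ) - i + 1) * ((m:ℝ) - i + 2) else 0)
        ≤ ∑ i ∈ Finset.range (m+1), (((m:ℝ) + 1) + (-1) * i) * (((m:ℝ) + 2) + (-1) * i) := by
      apply Finset.sum_le_sum
      intro i hi
      have him : (i:ℝ) ≤ m := by exact_mod_cast Nat.lt_succ_iff.mp (Finset.mem_range.mp hi)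
      split_ifs
      · apply le_of_eq; ring
      · nlinarith
    rw [hR, sumQ]
    rw [sumQ] at hLle
    refine hLle.trans (le_of_eq ?_)
    push_cast
    ring
  · -- middle case : k ≤ m ≤ 2k-2
    set K := 2*k - m - 1 with hK
    have hKcast : (K:ℝ) = 2*(k:ℝ) - (m:ℝ) - 1 := by
      have h : K + (m+1) = 2*k := by omega
      have h2 := congrArg (Nat.cast : ℕ → ℝ) h
      push_cast at h2
      linarith
    have hmk : (k:ℝ) ≤ (m:ℝ) := by exact_mod_cast Nat.lt_succ_iff.mp hk
    have hm2k : (m:ℝ) + 2 ≤ 2*(k:ℝ) := by exact_mod_cast hcase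
    have hL : (∑ i ∈ Finset.range (m+1),
        if i ≤ k ∧ m+2 ≤ k+i then ((m:ℝ) - i + 1) * ((m:ℝ) - i + 2) else 0)
        = ∑ j ∈ Finset.range K, (((k:ℝ) - 1) + (-1) * j) * ((k:ℝ) + (-1) * j) := by
      rw [window (m+1) (m+2-k) K _ _ (by intro i hi; omega) (by omega)]
      apply Finset.sum_congr rfl
      intro j hj
      push_cast [Nat.cast_sub (by omega : k ≤ m + 2)]
      ring
    have hR : (∑ i ∈ Finset.range (m+1),
        if i+1 ≤ k ∧ m+1 ≤ k+i then ((i:ℝ) + 1) * ((m:ℝ) - i + 1) else 0)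
        = ∑ j ∈ Finset.range K, (((m:ℝ) + 2 - k) + 1 * j) * ((k:ℝ) + (-1) * j) := by
      rw [window (m+1) (m+1-k) K _ _ (by intro i hi; omega) (by omega)]
      apply Finset.sum_congr rfl
      intro j hj
      push_cast [Nat.cast_sub (by omega : k ≤ m + 1)]
      ring
    rw [hL, hR, sumQ, sumQ, hKcast]
    nlinarith [mul_nonneg (mul_nonneg (by linarith : (0:ℝ) ≤ (k:ℝ) + 1)
      (by linarith : (0:ℝ) ≤ 2*(k:ℝ) - (m:ℝ) - 1)) (by linarith : (0:ℝ) ≤ (m:ℝ) + 2 - (k:ℝ))]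

lemma eval_nonneg_of_coeff (p : Polynomial ℝ) (h : ∀ m, 0 ≤ p.coeff m) {x : ℝ} (hx : 0 ≤ x) :
    0 ≤ p.eval x := by
  rw [Polynomial.eval_eq_sum_range]
  exact Finset.sum_nonneg fun i _ => mul_nonneg (h i) (pow_nonneg hx i)

lemma eval_le_of_coeff (p r : Polynomial ℝ) (h : ∀ m, p.coeff m ≤ r.coeff m) {x : ℝ}
    (hx : 0 ≤ x) : p.eval x ≤ r.eval x := by
  have hd : p.natDegree < max p.natDegree r.natDegree + 1 := by omega
  have hd' : r.natDegree < max p.natDegree r.natDegree + 1 := by omega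
  rw [Polynomial.eval_eq_sum_range' hd, Polynomial.eval_eq_sum_range' hd']
  exact Finset.sum_le_sum fun i _ => mul_le_mul_of_nonneg_right (h i) (pow_nonneg hx i)

theorem service_time_key_inequality
    (n : ℕ) (hn : 2 ≤ n) (σ Ts : ℝ) (hσ : 0 < σ) (hTs : 0 < Ts)
    (k : ℕ) (b0 : ℝ) (hb0 : 0 < b0) (b : ℕ → ℝ)
    (hb : ∀ i, b i = 2 ^ i * b0) :
    let f : ℝ → ℝ := fun γ => ∑ i ∈ Finset.range (k + 1), b i * γ ^ i
    let g : ℝ → ℝ := fun γ => σ + ((n:ℝ) / ((n:ℝ) - 1)) * Ts * γ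
    let S : ℝ → ℝ := fun γ => f γ * g γ
    ∀ γ ∈ Set.Icc (0:ℝ) 1,
      S γ * deriv (deriv S) γ - 2 * (deriv S γ) ^ 2 < 0 := by
  intro f g S γ hγ
  obtain ⟨hγ0, hγ1⟩ := hγ
  set c : ℝ := (n:ℝ) / ((n:ℝ) - 1) * Ts with hcdef
  have hn1 : (2:ℝ) ≤ (n:ℝ) := by exact_mod_cast hn
  have hc : 0 < c := by
    apply mul_pos _ hTs
    apply div_pos <;> linarith
  set q : Polynomial ℝ := ∑ i ∈ Finset.range (k+1), Polynomial.C (b i) * Polynomial.X ^ i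
    with hqdef
  have hcoeff : ∀ m : ℕ, q.coeff m = if m ≤ k then b m else 0 := by
    intro m
    rw [hqdef, Polynomial.finset_sum_coeff]
    simp only [Polynomial.coeff_C_mul, Polynomial.coeff_X_pow, mul_ite, mul_one, mul_zero]
    rw [Finset.sum_ite_eq (Finset.range (k+1)) m b]
    simp [Nat.lt_succ_iff]
  have hcoeffnn : ∀ m : ℕ, 0 ≤ q.coeff m := by
    intro m
    rw [hcoeff m]
    split_ifs
    · rw [hb]; positivity
    · exact le_rfl
  have hS : S = fun x => q.eval x * (σ + c * x) := by
    funext x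
    show (∑ i ∈ Finset.range (k + 1), b i * x ^ i) * (σ + (n:ℝ) / ((n:ℝ) - 1) * Ts * x)
      = q.eval x * (σ + c * x)
    rw [hqdef, Polynomial.eval_finset_sum]
    simp [hcdef]
  have hg' : ∀ x : ℝ, HasDerivAt (fun y : ℝ => σ + c * y) c x := by
    intro x
    simpa using ((hasDerivAt_id x).const_mul c).const_add σ
  have hd1 : deriv S = fun x => q.derivative.eval x * (σ + c * x) + q.eval x * c := by
    rw [hS]
    funext x
    exact ((q.hasDerivAt x).mul (hg' x)).deriv
  have hd2 : deriv (deriv S) γ =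
      (q.derivative.derivative.eval γ * (σ + c * γ) + q.derivative.eval γ * c)
        + q.derivative.eval γ * c := by
    rw [hd1]
    exact (((q.derivative.hasDerivAt γ).mul (hg' γ)).add ((q.hasDerivAt γ).mul_const c)).deriv
  -- key coefficient comparison
  have hcc : ∀ m : ℕ, (q * q.derivative.derivative).coeff m ≤ (2 * q.derivative ^ 2).coeff m := by
    intro m
    have e3 : ∑ i ∈ Finset.range (m+1), q.derivative.coeff i * q.derivative.coeff (m-i)
        = b0^2 * 2^(m+2) * ∑ i ∈ Finset.range (m+1),
            if i+1 ≤ k ∧ m+1 ≤ k+i then ((i:ℝ) + 1) * ((m:ℝ) - i + 1) else 0 := by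
      rw [Finset.mul_sum]
      refine Finset.sum_congr rfl fun i hi => ?_
      have him : i ≤ m := Nat.lt_succ_iff.mp (Finset.mem_range.mp hi)
      rw [Polynomial.coeff_derivative, Polynomial.coeff_derivative, hcoeff, hcoeff]
      by_cases h1 : i + 1 ≤ k
      · by_cases h2 : m - i + 1 ≤ k
        · rw [if_pos h1, if_pos h2, if_pos (by omega : i+1 ≤ k ∧ m+1 ≤ k+i), hb, hb]
          have hp : (2:ℝ)^(i+1) * (2:ℝ)^(m-i+1) = 2^(m+2) := by
            rw [← pow_add]; congr 1; omega
          have hcast : ((m - i : ℕ) : ℝ) = (m:ℝ) - i := by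
            push_cast [Nat.cast_sub him]; ring
          rw [← hp, hcast]
          ring
        · rw [if_pos h1, if_neg h2, if_neg (by omega : ¬(i+1 ≤ k ∧ m+1 ≤ k+i))]
          ring
      · rw [if_neg h1, if_neg (by omega : ¬(i+1 ≤ k ∧ m+1 ≤ k+i))]
        ring
    have e4 : ∑ i ∈ Finset.range (m+1), q.coeff i * q.derivative.derivative.coeff (m-i)
        = b0^2 * 2^(m+2) * ∑ i ∈ Finset.range (m+1),
            if i ≤ k ∧ m+2 ≤ k+i then ((m:ℝ) - i + 1) * ((m:ℝ) - i + 2) else 0 := by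
      rw [Finset.mul_sum]
      refine Finset.sum_congr rfl fun i hi => ?_
      have him : i ≤ m := Nat.lt_succ_iff.mp (Finset.mem_range.mp hi)
      rw [Polynomial.coeff_derivative, Polynomial.coeff_derivative, hcoeff, hcoeff]
      by_cases h1 : i ≤ k
      · by_cases h2 : m - i + 1 + 1 ≤ k
        · rw [if_pos h1, if_pos h2, if_pos (by omega : i ≤ k ∧ m+2 ≤ k+i), hb, hb]
          have hp : (2:ℝ)^i * (2:ℝ)^(m-i+1+1) = 2^(m+2) := by
            rw [← pow_add]; congr 1; omega
          have hcast : ((m - i : ℕ) : ℝ) = (m:ℝ) - i := by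
            push_cast [Nat.cast_sub him]; ring
          have hcast2 : ((m - i + 1 : ℕ) : ℝ) = (m:ℝ) - i + 1 := by
            push_cast [Nat.cast_sub him]; ring
          rw [← hp, hcast, hcast2]
          ring
        · rw [if_pos h1, if_neg h2, if_neg (by omega : ¬(i ≤ k ∧ m+2 ≤ k+i))]
          ring
      · rw [if_neg h1, if_neg (by omega : ¬(i ≤ k ∧ m+2 ≤ k+i))]
        ring
    have hmulcoeff : (q * q.derivative.derivative).coeff m
        = ∑ i ∈ Finset.range (m+1), q.coeff i * q.derivative.derivative.coeff (m-i) := by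
      rw [Polynomial.coeff_mul, Finset.Nat.sum_antidiagonal_eq_sum_range_succ_mk]
    have hsqcoeff : (2 * q.derivative ^ 2).coeff m
        = 2 * ∑ i ∈ Finset.range (m+1), q.derivative.coeff i * q.derivative.coeff (m-i) := by
      rw [two_mul, Polynomial.coeff_add, sq, Polynomial.coeff_mul,
        Finset.Nat.sum_antidiagonal_eq_sum_range_succ_mk, ← two_mul]
    rw [hmulcoeff, hsqcoeff, e3, e4]
    have hpos : (0:ℝ) ≤ b0^2 * 2^(m+2) := by positivity
    have h2 := mul_le_mul_of_nonneg_left (keyIneq k m) hpos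
    nlinarith [h2]
  -- pointwise facts
  set A := q.eval γ with hA'
  set B := q.derivative.eval γ with hB'
  set Cq := q.derivative.derivative.eval γ with hC'
  have hKey : A * Cq ≤ 2 * B ^ 2 := by
    have := eval_le_of_coeff _ _ hcc hγ0
    simpa [hA', hB', hC'] using this
  have hA : 0 < A := by
    rw [hA', hqdef, Polynomial.eval_finset_sum]
    apply Finset.sum_pos'
    · intro i _
      simp only [Polynomial.eval_mul, Polynomial.eval_C, Polynomial.eval_pow, Polynomial.eval_X]
      rw [hb]
      positivity
    · refine ⟨0, Finset.mem_range.mpr (by omega), ?_⟩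
      simp [hb 0, hb0]
  have hB : 0 ≤ B := by
    apply eval_nonneg_of_coeff _ _ hγ0
    intro m
    rw [Polynomial.coeff_derivative]
    have := hcoeffnn (m+1)
    positivity
  have hG : 0 < σ + c * γ := by nlinarith
  rw [hd2, hd1, hS]
  show A * (σ + c * γ) * ((Cq * (σ + c * γ) + B * c) + B * c) - 2 * (B * (σ + c * γ) + A * c)^2 < 0
  nlinarith [mul_nonneg (by linarith : (0:ℝ) ≤ 2 * B^2 - A * Cq) (sq_nonneg (σ + c * γ)),
    mul_pos (mul_pos hA hA) (mul_pos hc hc),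
    mul_nonneg (mul_nonneg (mul_nonneg hA.le hB) hc.le) hG.le]
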